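/- For all real x ∈ [0,1] and every positive integer M, one has 0 ≤ e^{−Mx²/2} − (1 − x²/2)^M ≤ e^{−Mx²/2} · ( (Mx⁴/4) / (1 − x²/2) ). -/

import Mathlib

/-- Quantitative estimate showing that `(1 - x²/2)^M` is well approximated by
the Gaussian `exp (-M x² / 2)` for `x ∈ [0,1]`. -/
theorem stmt8 (x : ℝ) (hx0 : 0 ≤ x) (hx1 : x ≤ 1) (M : ℕ) (hM : 1 ≤ M) :
    0 ≤ Real.exp (-(M : ℝ) * x ^ 2 / 2) - (1 - x ^ 2 / 2) ^ M ∧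
    Real.exp (-(M : ℝ) * x ^ 2 / 2) - (1 - x ^ 2 / 2) ^ M ≤
      Real.exp (-(M : ℝ) * x ^ 2 / 2) * (((M : ℝ) * x ^ 4 / 4) / (1 - x ^ 2 / 2)) := by
  set a : ℝ := x ^ 2 / 2 with ha
  have hx2 : x ^ 2 ≤ 1 := by nlinarith
  have ha0 : 0 ≤ a := by positivity
  have ha1 : a ≤ 1 / 2 := by simp [ha]; nlinarith
  have h1a : (0:ℝ) < 1 - a := by linarith
  have hM0 : (0:ℝ) ≤ (M:ℝ) := Nat.cast_nonneg M
  -- rewrite exponent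
  have hexp : Real.exp (-(M : ℝ) * x ^ 2 / 2) = Real.exp (-a) ^ M := by
    rw [← Real.exp_nat_mul, ha]; ring_nf
  have hupper : (1 - a) ^ M ≤ Real.exp (-a) ^ M := by
    apply pow_le_pow_left₀ h1a.le
    linarith [Real.add_one_le_exp (-a)]
  have hlower : Real.exp (-(a / (1 - a))) ≤ 1 - a := by
    have h := Real.add_one_le_exp (a / (1 - a))
    have hcancel : a / (1 - a) * (1 - a) = a := div_mul_cancel₀ a h1a.ne'
    have h2 : (1:ℝ) ≤ Real.exp (a / (1 - a)) * (1 - a) := by nlinarith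
    have h3 : Real.exp (-(a / (1 - a))) * Real.exp (a / (1 - a)) = 1 := by
      rw [← Real.exp_add]; simp
    nlinarith [Real.exp_pos (-(a / (1 - a)))]
  have hlowerM : Real.exp (-(M : ℝ) * (a / (1 - a))) ≤ (1 - a) ^ M := by
    have := pow_le_pow_left₀ (Real.exp_pos _).le hlower M
    calc Real.exp (-(M : ℝ) * (a / (1 - a)))
        = Real.exp (-(a / (1 - a))) ^ M := by rw [← Real.exp_nat_mul]; ring_nf
      _ ≤ (1 - a) ^ M := this
  constructor
  · rw [hexp]; linarith
  · rw [hexp]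
    have key : Real.exp (-a) ^ M - (1 - a) ^ M ≤
        Real.exp (-a) ^ M - Real.exp (-(M : ℝ) * (a / (1 - a))) := by linarith
    have split : Real.exp (-(M : ℝ) * (a / (1 - a))) =
        Real.exp (-a) ^ M * Real.exp (-((M:ℝ) * a ^ 2 / (1 - a))) := by
      rw [← Real.exp_nat_mul, ← Real.exp_add]
      congr 1
      field_simp
      ring
    have hfin : Real.exp (-a) ^ M - Real.exp (-(M : ℝ) * (a / (1 - a))) ≤
        Real.exp (-a) ^ M * ((M:ℝ) * a ^ 2 / (1 - a)) := by
      rw [split]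
      have h3 : 1 - (M:ℝ) * a ^ 2 / (1 - a) ≤ Real.exp (-((M:ℝ) * a ^ 2 / (1 - a))) := by
        linarith [Real.add_one_le_exp (-((M:ℝ) * a ^ 2 / (1 - a)))]
      have hp : (0:ℝ) < Real.exp (-a) ^ M := by positivity
      nlinarith [hp, h3]
    have heq : ((M:ℝ) * x ^ 4 / 4) / (1 - x ^ 2 / 2) = (M:ℝ) * a ^ 2 / (1 - a) := by
      rw [ha]; ring_nf
    rw [heq]
    linarith
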